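/- Let p be a prime and d, e ≥ 1 integers. The number of pairs (f, g) of monic polynomials over ℤ/pℤ with deg f = d, deg g = e, and (f, g) = (ℤ/pℤ)[x] equals p^{d+e}(1 − 1/p). -/

import Mathlib

open Polynomial

section Aux

variable {K : Type*} [Field K] [DecidableEq K]

lemma myspan_pair_top_iff (f g : K[X]) :
    Ideal.span {f, g} = ⊤ ↔ IsCoprime f g := by
  rw [← span_gcd, Ideal.span_singleton_eq_top, gcd_isUnit_iff]

lemma mygcd_ne_zero {f : K[X]} (g : K[X]) (hf : f ≠ 0) : gcd f g ≠ 0 :=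
  fun hz => hf ((gcd_eq_zero_iff f g).mp hz).1

lemma mygcd_monic {f : K[X]} (g : K[X]) (hf : f ≠ 0) : (gcd f g).Monic := by
  have h1 := Polynomial.monic_normalize (p := gcd f g) (mygcd_ne_zero g hf)
  rwa [normalize_gcd] at h1

omit [DecidableEq K] in
lemma mydivX_monic {h : K[X]} (hh : h.Monic) (h1 : h.natDegree ≠ 0) : h.divX.Monic := by
  unfold Polynomial.Monic Polynomial.leadingCoeff
  rw [natDegree_divX_eq_natDegree_tsub_one, coeff_divX,
    Nat.sub_add_cancel (Nat.one_le_iff_ne_zero.mpr h1)]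
  exact hh

lemma mygcd_div_div {f g : K[X]} (hf : f ≠ 0) :
    gcd (f / gcd f g) (g / gcd f g) = 1 := by
  set h := gcd f g with hh
  have hne : h ≠ 0 := mygcd_ne_zero g hf
  have hm : h.Monic := mygcd_monic g hf
  have h1 : h * (f / h) = f := EuclideanDomain.mul_div_cancel' hne (gcd_dvd_left f g)
  have h2 : h * (g / h) = g := EuclideanDomain.mul_div_cancel' hne (gcd_dvd_right f g)
  set a := f / h
  set b := g / h
  have key : h * gcd a b = h * 1 := by
    rw [mul_one, hh]
    conv_rhs => rw [← h1, ← h2]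
    rw [gcd_mul_left, hm.normalize_eq_self]
  exact mul_left_cancel₀ hne key

lemma gcd_natDegree_ne_zero {f g : K[X]} (hf : f ≠ 0)
    (hspan : Ideal.span {f, g} ≠ ⊤) : (gcd f g).natDegree ≠ 0 := by
  intro h0
  apply hspan
  rw [myspan_pair_top_iff, ← gcd_isUnit_iff]
  rw [(mygcd_monic g hf).natDegree_eq_zero.mp h0]
  exact isUnit_one

omit [DecidableEq K] in
lemma comp_spec2 {h f : K[X]} (hh : h.Monic) (hmf : f.Monic) (hdvd : h ∣ f) :
    (f / h).Monic ∧ (f / h).natDegree = f.natDegree - h.natDegree ∧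
      h.natDegree ≤ f.natDegree := by
  have hne := hh.ne_zero
  have h1 : h * (f / h) = f := EuclideanDomain.mul_div_cancel' hne hdvd
  have hqm : (f / h).Monic := hh.of_mul_monic_left (by rwa [h1])
  have hsum : f.natDegree = h.natDegree + (f / h).natDegree := by
    rw [← hh.natDegree_mul hqm, h1]
  exact ⟨hqm, by omega, by omega⟩

omit [DecidableEq K] in
lemma comp_spec {h f : K[X]} (hh : h.Monic) (hk : h.natDegree ≠ 0) (hmf : f.Monic)
    (hdvd : h ∣ f) :
    (h.divX * (f / h)).Monic ∧ (h.divX * (f / h)).natDegree = f.natDegree - 1 := by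
  obtain ⟨hqm, hqd, hle⟩ := comp_spec2 hh hmf hdvd
  have hdm : h.divX.Monic := mydivX_monic hh hk
  refine ⟨hdm.mul hqm, ?_⟩
  rw [hdm.natDegree_mul hqm, natDegree_divX_eq_natDegree_tsub_one, hqd]
  omega

omit [DecidableEq K] in
lemma bwd_h_spec {h₁ : K[X]} (hm : h₁.Monic) (c : K) :
    (h₁ * X + C c).Monic ∧ (h₁ * X + C c).natDegree = h₁.natDegree + 1 := by
  have hmul : (h₁ * X).Monic := hm.mul monic_X
  have hdeg : (C c).degree < (h₁ * X).degree := by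
    apply lt_of_le_of_lt degree_C_le
    rw [degree_eq_natDegree hmul.ne_zero, hm.natDegree_mul monic_X, natDegree_X]
    exact_mod_cast Nat.succ_pos h₁.natDegree
  refine ⟨hmul.add_of_left hdeg, ?_⟩
  rw [natDegree_eq_of_degree_eq (degree_add_eq_left_of_degree_lt hdeg),
    hm.natDegree_mul monic_X, natDegree_X]

end Aux

section Main

variable {K : Type*} [Field K] [DecidableEq K]

noncomputable def noncoprimeEquiv (d e : ℕ) (hd : 1 ≤ d) (he : 1 ≤ e) :
    {fg : K[X] × K[X] // (fg.1.Monic ∧ fg.1.natDegree = d ∧ fg.2.Monic ∧ fg.2.natDegree = e) ∧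
      Ideal.span {fg.1, fg.2} ≠ ⊤} ≃
    K × ({f : K[X] // f.Monic ∧ f.natDegree = d - 1} ×
         {g : K[X] // g.Monic ∧ g.natDegree = e - 1}) where
  toFun x :=
    ⟨(gcd x.1.1 x.1.2).coeff 0,
     ⟨(gcd x.1.1 x.1.2).divX * (x.1.1 / gcd x.1.1 x.1.2), by
        obtain ⟨⟨f, g⟩, ⟨hmf, hdf, hmg, hdg⟩, hspan⟩ := x
        have hh : (gcd f g).Monic := mygcd_monic g hmf.ne_zero
        have hk : (gcd f g).natDegree ≠ 0 := gcd_natDegree_ne_zero hmf.ne_zero hspan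
        obtain ⟨h1, h2⟩ := comp_spec hh hk hmf (gcd_dvd_left f g)
        exact ⟨h1, by rw [h2, hdf]⟩⟩,
     ⟨(gcd x.1.1 x.1.2).divX * (x.1.2 / gcd x.1.1 x.1.2), by
        obtain ⟨⟨f, g⟩, ⟨hmf, hdf, hmg, hdg⟩, hspan⟩ := x
        have hh : (gcd f g).Monic := mygcd_monic g hmf.ne_zero
        have hk : (gcd f g).natDegree ≠ 0 := gcd_natDegree_ne_zero hmf.ne_zero hspan
        obtain ⟨h1, h2⟩ := comp_spec hh hk hmg (gcd_dvd_right f g)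
        exact ⟨h1, by rw [h2, hdg]⟩⟩⟩
  invFun y :=
    ⟨((gcd y.2.1.1 y.2.2.1 * X + C y.1) * (y.2.1.1 / gcd y.2.1.1 y.2.2.1),
      (gcd y.2.1.1 y.2.2.1 * X + C y.1) * (y.2.2.1 / gcd y.2.1.1 y.2.2.1)), by
      obtain ⟨c, ⟨F, hmF, hdF⟩, ⟨G, hmG, hdG⟩⟩ := y
      dsimp only
      have hh₁ : (gcd F G).Monic := mygcd_monic G hmF.ne_zero
      obtain ⟨hqF, hdqF, hleF⟩ := comp_spec2 hh₁ hmF (gcd_dvd_left F G)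
      obtain ⟨hqG, hdqG, hleG⟩ := comp_spec2 hh₁ hmG (gcd_dvd_right F G)
      obtain ⟨hmh, hdh⟩ := bwd_h_spec hh₁ c
      refine ⟨⟨hmh.mul hqF, ?_, hmh.mul hqG, ?_⟩, ?_⟩
      · rw [hmh.natDegree_mul hqF, hdh, hdqF, hdF]; omega
      · rw [hmh.natDegree_mul hqG, hdh, hdqG, hdG]; omega
      · intro htop
        have hcop := (myspan_pair_top_iff _ _).mp htop
        have hu : IsUnit (gcd F G * X + C c) :=
          hcop.isUnit_of_dvd' ⟨_, rfl⟩ ⟨_, rfl⟩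
        have := natDegree_eq_zero_of_isUnit hu
        omega⟩
  left_inv x := by
    obtain ⟨⟨f, g⟩, ⟨hmf, hdf, hmg, hdg⟩, hspan⟩ := x
    apply Subtype.ext
    dsimp only
    set h := gcd f g with hhdef
    have hh : h.Monic := mygcd_monic g hmf.ne_zero
    have hk : h.natDegree ≠ 0 := gcd_natDegree_ne_zero hmf.ne_zero hspan
    have hdm : h.divX.Monic := mydivX_monic hh hk
    have hgcdFG : gcd (h.divX * (f / h)) (h.divX * (g / h)) = h.divX := by
      rw [gcd_mul_left, hdm.normalize_eq_self, hhdef, mygcd_div_div hmf.ne_zero, mul_one]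
    have hFdiv : h.divX * (f / h) / h.divX = f / h := mul_div_cancel_left₀ _ hdm.ne_zero
    have hGdiv : h.divX * (g / h) / h.divX = g / h := mul_div_cancel_left₀ _ hdm.ne_zero
    have hX : h.divX * X + C (h.coeff 0) = h := divX_mul_X_add h
    rw [hgcdFG, hFdiv, hGdiv, hX]
    rw [EuclideanDomain.mul_div_cancel' hh.ne_zero (gcd_dvd_left f g),
      EuclideanDomain.mul_div_cancel' hh.ne_zero (gcd_dvd_right f g)]
  right_inv y := by
    obtain ⟨c, ⟨F, hmF, hdF⟩, ⟨G, hmG, hdG⟩⟩ := y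
    dsimp only
    let h₁ := gcd F G
    have hh₁def : h₁ = gcd F G := rfl
    have hh₁ : h₁.Monic := mygcd_monic G hmF.ne_zero
    obtain ⟨hmh, hdh⟩ := bwd_h_spec hh₁ c
    have hF : h₁ * (F / h₁) = F := EuclideanDomain.mul_div_cancel' hh₁.ne_zero (gcd_dvd_left F G)
    have hG : h₁ * (G / h₁) = G := EuclideanDomain.mul_div_cancel' hh₁.ne_zero (gcd_dvd_right F G)
    have hcop : gcd (F / h₁) (G / h₁) = 1 := by
      rw [hh₁def]; exact mygcd_div_div hmF.ne_zero
    have hgcd : gcd ((h₁ * X + C c) * (F / h₁)) ((h₁ * X + C c) * (G / h₁)) = h₁ * X + C c := by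
      rw [gcd_mul_left, hmh.normalize_eq_self, hcop, mul_one]
    have hc0 : (h₁ * X + C c).coeff 0 = c := by
      rw [coeff_add, coeff_mul_X_zero, coeff_C_zero, zero_add]
    have hdivX : (h₁ * X + C c).divX = h₁ := by
      have h2 := divX_mul_X_add (h₁ * X + C c)
      rw [hc0] at h2
      have h3 : (h₁ * X + C c).divX * X = h₁ * X := by
        have := h2.trans rfl
        exact add_right_cancel this
      exact mul_right_cancel₀ X_ne_zero h3
    have hFd : (h₁ * X + C c) * (F / h₁) / (h₁ * X + C c) = F / h₁ :=
      mul_div_cancel_left₀ _ hmh.ne_zero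
    have hGd : (h₁ * X + C c) * (G / h₁) / (h₁ * X + C c) = G / h₁ :=
      mul_div_cancel_left₀ _ hmh.ne_zero
    refine Prod.ext ?_ (Prod.ext ?_ ?_)
    · dsimp only; rw [hgcd, hc0]
    · apply Subtype.ext; dsimp only; rw [hgcd, hFd, hdivX, hF]
    · apply Subtype.ext; dsimp only; rw [hgcd, hGd, hdivX, hG]

end Main

section Count

variable {K : Type*} [Field K] [DecidableEq K]

noncomputable def monicEquivFun (n : ℕ) :
    {f : K[X] // f.Monic ∧ f.natDegree = n} ≃ (Fin n → K) :=
  (Polynomial.monicEquivDegreeLT n).trans (degreeLTEquiv K n).toEquiv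

instance monicFinite [Finite K] (n : ℕ) :
    Finite {f : K[X] // f.Monic ∧ f.natDegree = n} :=
  Finite.of_equiv _ (monicEquivFun n).symm

omit [DecidableEq K] in
lemma card_monic [Finite K] (n : ℕ) :
    Nat.card {f : K[X] // f.Monic ∧ f.natDegree = n} = Nat.card K ^ n := by
  classical
  rw [Nat.card_congr (monicEquivFun n)]
  simp [Nat.card_fun]

def pairEquiv (d e : ℕ) :
    {fg : K[X] × K[X] // fg.1.Monic ∧ fg.1.natDegree = d ∧ fg.2.Monic ∧ fg.2.natDegree = e} ≃
      {f : K[X] // f.Monic ∧ f.natDegree = d} × {g : K[X] // g.Monic ∧ g.natDegree = e} where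
  toFun x := (⟨x.1.1, x.2.1, x.2.2.1⟩, ⟨x.1.2, x.2.2.2.1, x.2.2.2.2⟩)
  invFun y := ⟨(y.1.1, y.2.1), y.1.2.1, y.1.2.2, y.2.2.1, y.2.2.2⟩
  left_inv x := rfl
  right_inv y := rfl

end Count

theorem card_strongly_coprime_pairs_zmod_p (p : ℕ) [Fact p.Prime] (d e : ℕ)
    (hd : 1 ≤ d) (he : 1 ≤ e) :
    Nat.card {fg : Polynomial (ZMod p) × Polynomial (ZMod p) //
        fg.1.Monic ∧ fg.1.natDegree = d ∧ fg.2.Monic ∧ fg.2.natDegree = e ∧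
        Ideal.span {fg.1, fg.2} = (⊤ : Ideal (Polynomial (ZMod p)))} =
      p ^ (d + e) - p ^ (d + e - 1) := by
  classical
  set K := ZMod p
  have hp : Nat.card K = p := Nat.card_zmod p
  set M : K[X] × K[X] → Prop :=
    fun fg => fg.1.Monic ∧ fg.1.natDegree = d ∧ fg.2.Monic ∧ fg.2.natDegree = e with hM
  set T : K[X] × K[X] → Prop := fun fg => Ideal.span {fg.1, fg.2} = ⊤ with hT
  -- finiteness
  haveI : Finite {fg : K[X] × K[X] // M fg} := Finite.of_equiv _ (pairEquiv d e).symm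
  haveI : Finite {x : {fg : K[X] × K[X] // M fg} // T x.1} := Subtype.finite
  haveI : Finite {x : {fg : K[X] × K[X] // M fg} // ¬ T x.1} := Subtype.finite
  have eT : {x : {fg : K[X] × K[X] // M fg} // T x.1} ≃ {fg : K[X] × K[X] // M fg ∧ T fg} :=
    Equiv.subtypeSubtypeEquivSubtypeInter M T
  have eNT : {x : {fg : K[X] × K[X] // M fg} // ¬ T x.1} ≃
      {fg : K[X] × K[X] // M fg ∧ ¬ T fg} :=
    Equiv.subtypeSubtypeEquivSubtypeInter M (fun fg => ¬ T fg)
  -- split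
  have hsplit : Nat.card {fg : K[X] × K[X] // M fg} =
      Nat.card {fg : K[X] × K[X] // M fg ∧ T fg} +
      Nat.card {fg : K[X] × K[X] // M fg ∧ ¬ T fg} := by
    rw [← Nat.card_congr (Equiv.sumCompl (fun x : {fg : K[X] × K[X] // M fg} => T x.1)),
      Nat.card_sum, Nat.card_congr eT, Nat.card_congr eNT]
  -- total count
  have htot : Nat.card {fg : K[X] × K[X] // M fg} = p ^ (d + e) := by
    rw [Nat.card_congr (pairEquiv d e), Nat.card_prod, card_monic, card_monic, hp, ← pow_add]
  -- noncoprime count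
  have hnc : Nat.card {fg : K[X] × K[X] // M fg ∧ ¬ T fg} = p ^ (d + e - 1) := by
    have : {fg : K[X] × K[X] // M fg ∧ ¬ T fg} ≃
        {fg : K[X] × K[X] // (fg.1.Monic ∧ fg.1.natDegree = d ∧ fg.2.Monic ∧
          fg.2.natDegree = e) ∧ Ideal.span {fg.1, fg.2} ≠ ⊤} :=
      Equiv.subtypeEquivRight (fun fg => Iff.rfl)
    rw [Nat.card_congr (this.trans (noncoprimeEquiv d e hd he)), Nat.card_prod, Nat.card_prod,
      card_monic, card_monic, hp,
      show d + e - 1 = 1 + ((d - 1) + (e - 1)) by omega, pow_add, pow_add, pow_one]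
  -- target equiv
  have etarget : {fg : K[X] × K[X] //
        fg.1.Monic ∧ fg.1.natDegree = d ∧ fg.2.Monic ∧ fg.2.natDegree = e ∧
        Ideal.span {fg.1, fg.2} = (⊤ : Ideal (K[X]))} ≃
      {fg : K[X] × K[X] // M fg ∧ T fg} :=
    Equiv.subtypeEquivRight (fun fg => by rw [hM, hT]; tauto)
  rw [Nat.card_congr etarget]
  omega
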